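/- For any t > 0 and nonnegative integers l, r, the double integral ∫₀ᵗ ∫₀^∞ ((x(t-s)/2)^{l+r}/(l!·r!))·e^{-x(t-s)}·(3s³/(2t³))·e^{-sx/2} dx ds equals 3·C(l+r, l)·∫₀¹ (1-a)³·aˡ⁺ʳ/(1+a)^{l+r+1} da. -/

import Mathlib

open MeasureTheory Set intervalIntegral

lemma aux_pow_exp (n : ℕ) {c : ℝ} (hc : 0 < c) :
    ∫ x in Set.Ioi (0:ℝ), x ^ n * Real.exp (-(c * x)) = n.factorial / c ^ (n + 1) := by
  have h := Real.integral_rpow_mul_exp_neg_mul_Ioi (a := (n : ℝ) + 1) (by positivity) hc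
  rw [show ((n:ℝ) + 1) = ((n + 1 : ℕ) : ℝ) by push_cast; ring] at h
  rw [Real.rpow_natCast] at h
  have hG : Real.Gamma ((n + 1 : ℕ) : ℝ) = n.factorial := by
    push_cast
    exact Real.Gamma_nat_eq_factorial n
  rw [hG] at h
  rw [MeasureTheory.setIntegral_congr_fun measurableSet_Ioi
    (fun x (hx : x ∈ Set.Ioi (0:ℝ)) => by
      show x ^ (((n + 1 : ℕ) : ℝ) - 1) * Real.exp (-(c * x)) = x ^ n * Real.exp (-(c * x))
      rw [show (((n + 1 : ℕ) : ℝ) - 1) = (n : ℝ) by push_cast; ring, Real.rpow_natCast])] at h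
  rw [h, one_div, inv_pow]
  field_simp

theorem stit_pLR_integral_formula (t : ℝ) (ht : 0 < t) (l r : ℕ) :
    (∫ s in (0:ℝ)..t, ∫ x in Set.Ioi (0:ℝ),
        ((x * (t - s) / 2)^(l + r) / ((Nat.factorial l : ℝ) * (Nat.factorial r : ℝ))) *
          Real.exp (-(x * (t - s))) * (3 * s^3 / (2 * t^3)) * Real.exp (-(s * x / 2)))
      = 3 * (Nat.choose (l + r) l : ℝ) *
          ∫ a in (0:ℝ)..1, (1 - a)^3 * a^(l + r) / (1 + a)^(l + r + 1) := by
  set n := l + r with hn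
  set C : ℝ := (Nat.choose n l : ℝ) with hC
  set G : ℝ → ℝ := fun a => 3 * C * ((1 - a)^3 * a^n / (1 + a)^(n + 1)) with hG
  have ht' : (t : ℝ) ≠ 0 := ht.ne'
  have hl : (Nat.factorial l : ℝ) ≠ 0 := Nat.cast_ne_zero.mpr (Nat.factorial_ne_zero l)
  have hr : (Nat.factorial r : ℝ) ≠ 0 := Nat.cast_ne_zero.mpr (Nat.factorial_ne_zero r)
  have hfact : (n.factorial : ℝ) = C * (Nat.factorial l : ℝ) * (Nat.factorial r : ℝ) := by
    rw [hC]
    have h1 : (l + r).choose l = (l + r).choose r := by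
      rw [← Nat.choose_symm (Nat.le_add_right l r)]
      congr 1
      omega
    have h2 := Nat.add_choose_mul_factorial_mul_factorial l r
    rw [hn, h1]
    exact_mod_cast h2.symm
  -- Step 1: the s-integrand equals (1/t) * G ((t - s)/t) on [0, t]
  have key : ∀ s ∈ Set.uIcc (0:ℝ) t,
      (∫ x in Set.Ioi (0:ℝ),
        ((x * (t - s) / 2)^n / ((Nat.factorial l : ℝ) * (Nat.factorial r : ℝ))) *
          Real.exp (-(x * (t - s))) * (3 * s^3 / (2 * t^3)) * Real.exp (-(s * x / 2)))
      = (1/t) * G ((t - s)/t) := by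
    intro s hs
    rw [Set.uIcc_of_le ht.le] at hs
    obtain ⟨hs0, hst⟩ := hs
    have hc : 0 < t - s / 2 := by linarith
    have h2ts : (2 * t - s) ≠ 0 := by nlinarith
    set K : ℝ := ((t - s)/2)^n / ((Nat.factorial l : ℝ) * (Nat.factorial r : ℝ)) *
      (3 * s^3 / (2 * t^3)) with hK
    have hpt : ∀ x : ℝ,
        ((x * (t - s) / 2)^n / ((Nat.factorial l : ℝ) * (Nat.factorial r : ℝ))) *
          Real.exp (-(x * (t - s))) * (3 * s^3 / (2 * t^3)) * Real.exp (-(s * x / 2))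
        = K * (x ^ n * Real.exp (-((t - s / 2) * x))) := by
      intro x
      have e : Real.exp (-(x * (t - s))) * Real.exp (-(s * x / 2))
          = Real.exp (-((t - s / 2) * x)) := by
        rw [← Real.exp_add]; congr 1; ring
      calc ((x * (t - s) / 2)^n / ((Nat.factorial l : ℝ) * (Nat.factorial r : ℝ))) *
            Real.exp (-(x * (t - s))) * (3 * s^3 / (2 * t^3)) * Real.exp (-(s * x / 2))
          = ((x * (t - s) / 2)^n / ((Nat.factorial l : ℝ) * (Nat.factorial r : ℝ)) *
            (3 * s^3 / (2 * t^3))) *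
            (Real.exp (-(x * (t - s))) * Real.exp (-(s * x / 2))) := by ring
        _ = ((x * (t - s) / 2)^n / ((Nat.factorial l : ℝ) * (Nat.factorial r : ℝ)) *
            (3 * s^3 / (2 * t^3))) * Real.exp (-((t - s / 2) * x)) := by rw [e]
        _ = K * (x ^ n * Real.exp (-((t - s / 2) * x))) := by
            rw [hK, show x * (t - s) / 2 = x * ((t - s)/2) by ring, mul_pow]; ring
    simp_rw [hpt]
    rw [MeasureTheory.integral_const_mul, aux_pow_exp n hc, hK, hG, hfact]
    have e1 : 1 - (t - s)/t = s / t := by field_simp; ring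
    have e2 : 1 + (t - s)/t = (2 * t - s) / t := by field_simp; ring
    simp only [e1, e2]
    rw [div_pow, div_pow, div_pow, div_pow,
      show t - s / 2 = (2 * t - s) / 2 by ring, div_pow]
    have h2n : ((2:ℝ))^n ≠ 0 := by positivity
    have h2n1 : ((2:ℝ))^(n+1) ≠ 0 := by positivity
    have htn : (t:ℝ)^n ≠ 0 := pow_ne_zero _ ht'
    have htn1 : (t:ℝ)^(n+1) ≠ 0 := pow_ne_zero _ ht'
    have hts : ((2*t - s):ℝ)^(n+1) ≠ 0 := pow_ne_zero _ h2ts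
    field_simp
    ring
  rw [intervalIntegral.integral_congr key]
  -- Step 2: substitution a = (t - s)/t
  have hder : ∀ s ∈ Set.uIcc (0:ℝ) t,
      HasDerivAt (fun s : ℝ => (t - s)/t) (-(1/t)) s := by
    intro s _
    have : HasDerivAt (fun s : ℝ => (t - s)/t) ((-1)/t) s :=
      ((hasDerivAt_id s).const_sub t).div_const t
    simpa [neg_div] using this
  have hGc : ContinuousOn G ((fun s : ℝ => (t - s)/t) '' Set.uIcc (0:ℝ) t) := by
    have himg : ((fun s : ℝ => (t - s)/t) '' Set.uIcc (0:ℝ) t) ⊆ Set.Ici (0:ℝ) := by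
      rintro a ⟨s, hs, rfl⟩
      rw [Set.uIcc_of_le ht.le] at hs
      exact div_nonneg (by linarith [hs.2]) ht.le
    apply ContinuousOn.mono _ himg
    apply ContinuousOn.mul continuousOn_const
    apply ContinuousOn.div (by fun_prop) (by fun_prop)
    intro a ha
    have : (0:ℝ) ≤ a := ha
    positivity
  have hsub := intervalIntegral.integral_comp_smul_deriv' (a := (0:ℝ)) (b := t)
    hder continuousOn_const hGc
  simp only [smul_eq_mul, Function.comp] at hsub
  have e0 : (t - 0)/t = 1 := by field_simp; simp
  have e1 : (t - t)/t = 0 := by simp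
  rw [e0, e1] at hsub
  have flip : ∫ s in (0:ℝ)..t, (1/t) * G ((t - s)/t)
      = - ∫ s in (0:ℝ)..t, -(1/t) * G ((t - s)/t) := by
    rw [← intervalIntegral.integral_neg]; congr 1; ext s; ring
  rw [flip, hsub, intervalIntegral.integral_symm, neg_neg, hG,
    ← intervalIntegral.integral_const_mul]
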